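/- Let q be a prime power, and let N be a positive integer. Suppose k ∈ ℚ[z] is a polynomial such that k(qˢ)/q^{sN} is an integer for all positive integers s. Then z^N divides k(z) in ℚ[z], i.e., h(z) = k(z)/z^N is a polynomial. -/

import Mathlib

open Polynomial

lemma clear_denoms (k : Polynomial ℚ) :
    ∃ (b : ℤ) (K : Polynomial ℤ), b ≠ 0 ∧ K.map (algebraMap ℤ ℚ) = (b : ℚ) • k := by
  obtain ⟨b, hb⟩ := IsLocalization.integerNormalization_map_to_map (nonZeroDivisors ℤ)
    (S := ℚ) k
  refine ⟨b, IsLocalization.integerNormalization (nonZeroDivisors ℤ) k,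
    nonZeroDivisors.coe_ne_zero b, ?_⟩
  rw [hb, zsmul_eq_mul, Polynomial.smul_eq_C_mul]
  norm_cast

lemma eval_int_pt (b : ℤ) (K : Polynomial ℤ) (k : Polynomial ℚ)
    (hK : K.map (algebraMap ℤ ℚ) = (b : ℚ) • k) (x : ℤ) :
    ((K.eval x : ℤ) : ℚ) = (b : ℚ) * k.eval (x : ℚ) := by
  have h0 := congrArg (Polynomial.eval ((x : ℤ) : ℚ)) hK
  rw [Polynomial.eval_intCast_map] at h0
  simpa using h0

lemma eval_zero_eq_zero (q : ℕ) (hq2 : 2 ≤ q) (k : Polynomial ℚ)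
    (h : ∀ s : ℕ, 1 ≤ s → ∃ m : ℤ, k.eval ((q : ℚ) ^ s) = m * (q : ℚ) ^ s) :
    k.eval 0 = 0 := by
  obtain ⟨b, K, hb, hK⟩ := clear_denoms k
  have key : ∀ s : ℕ, 1 ≤ s → (q : ℤ) ^ s ∣ K.eval 0 := by
    intro s hs
    obtain ⟨m, hm⟩ := h s hs
    have h1 := eval_int_pt b K k hK ((q : ℤ) ^ s)
    rw [show (((q:ℤ)^s : ℤ) : ℚ) = (q:ℚ)^s by push_cast; ring, hm] at h1
    have h2 : K.eval ((q : ℤ) ^ s) = b * (m * (q : ℤ) ^ s) := by exact_mod_cast h1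
    have hd : (q : ℤ) ^ s ∣ K.eval ((q:ℤ)^s) := ⟨b * m, by rw [h2]; ring⟩
    have hd2 : (q : ℤ) ^ s ∣ K.eval ((q:ℤ)^s) - K.eval 0 := by
      have h3 := Polynomial.sub_dvd_eval_sub ((q:ℤ)^s) 0 K
      simpa using h3
    exact (dvd_sub_right hd).mp hd2
  have hK0 : K.eval 0 = 0 := by
    by_contra hne
    set a := (K.eval 0).natAbs with ha
    have hane : a ≠ 0 := by simpa [ha, Int.natAbs_eq_zero] using hne
    have hlt : a < q ^ (a + 1) := by
      calc a < 2 ^ a := Nat.lt_two_pow_self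
        _ ≤ q ^ a := Nat.pow_le_pow_left hq2 _
        _ ≤ q ^ (a + 1) := Nat.pow_le_pow_right (by omega) (Nat.le_succ a)
    have hdvd := key (a + 1) (by omega)
    have h4 : q ^ (a+1) ∣ a := by
      have h5 := Int.natAbs_dvd_natAbs.mpr hdvd
      simpa [Int.natAbs_pow] using h5
    have := Nat.le_of_dvd (Nat.pos_of_ne_zero hane) h4
    omega
  have h1 := eval_int_pt b K k hK 0
  rw [hK0] at h1
  simp at h1
  rcases h1 with h1 | h1
  · exact absurd h1 (by exact_mod_cast hb)
  · exact h1

lemma aux_ind (q : ℕ) (hq2 : 2 ≤ q) : ∀ (N : ℕ) (k : Polynomial ℚ),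
    (∀ s : ℕ, 1 ≤ s → ∃ m : ℤ, k.eval ((q : ℚ) ^ s) = m * (q : ℚ) ^ (s * N)) →
    (Polynomial.X : Polynomial ℚ) ^ N ∣ k := by
  intro N
  induction N with
  | zero => intro k _; simpa using dvd_refl k
  | succ N ih =>
    intro k hk
    have hq0 : (q : ℚ) ≠ 0 := by positivity
    have h0 : k.eval 0 = 0 := by
      apply eval_zero_eq_zero q hq2
      intro s hs
      obtain ⟨m, hm⟩ := hk s hs
      refine ⟨m * (q : ℤ) ^ (s * N), ?_⟩
      rw [hm]
      push_cast
      rw [show s * (N + 1) = s * N + s by ring]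
      ring
    have hX : (Polynomial.X : Polynomial ℚ) ∣ k := by
      have := (Polynomial.dvd_iff_isRoot (p := k) (a := 0)).mpr h0
      simpa using this
    obtain ⟨k₁, rfl⟩ := hX
    have hk₁ : ∀ s : ℕ, 1 ≤ s → ∃ m : ℤ, k₁.eval ((q : ℚ) ^ s) = m * (q : ℚ) ^ (s * N) := by
      intro s hs
      obtain ⟨m, hm⟩ := hk s hs
      rw [Polynomial.eval_mul, Polynomial.eval_X] at hm
      have hqs : ((q : ℚ) ^ s) ≠ 0 := by positivity
      refine ⟨m, mul_left_cancel₀ hqs ?_⟩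
      rw [hm, show s * (N + 1) = s + s * N by ring, pow_add]
      ring
    have := ih k₁ hk₁
    rw [pow_succ']
    exact mul_dvd_mul (dvd_refl _) this


/-- Let `q` be a prime power and `N ≥ 1`.  If `k ∈ ℚ[z]` satisfies
`k(qˢ)/q^{sN} ∈ ℤ` for all `s ≥ 1`, then `z^N` divides `k(z)` in `ℚ[z]`. -/
theorem stmt_19 (q : ℕ) (hq : IsPrimePow q) (N : ℕ) (hN : 1 ≤ N)
    (k : Polynomial ℚ)
    (h : ∀ s : ℕ, 1 ≤ s → ∃ m : ℤ, k.eval ((q : ℚ) ^ s) = m * (q : ℚ) ^ (s * N)) :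
    (Polynomial.X : Polynomial ℚ) ^ N ∣ k := by
  exact aux_ind q hq.two_le N k h
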